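/- Let X = ℝᵖ and U = ℝᵐ, let f : X × U → X, let ℓ : X × U → ℝ be a nonnegative stage cost, let N ≥ 1, and define the horizon-N value V(z) = inf over control sequences (u(0),…,u(N−1)) of Σ_{τ=0}^{N−1} ℓ(x(τ),u(τ)) with x(0) = z, x(τ+1) = f(x(τ),u(τ)). Consider the closed-loop sequence z₀ = z and z_{k+1} = f(z_k, u*_k(0)), where for each k, u*_k is a control sequence attaining the infimum V(z_k), with trajectory x*_k, and assume that for each k there exists w ∈ U with ℓ(x*_k(N), w) = 0. Then the sequence (V(z_k))_{k∈ℕ} is nonincreasing and converges, and the closed-loop stage costs satisfy ℓ(z_k, u*_k(0)) → 0 as k → ∞. -/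

import Mathlib

open Filter

open Fin.NatCast in
/-- The predicted state trajectory from initial state `z` under the control
sequence `u = (u(0),…,u(N−1))`: `x(0) = z`, `x(τ+1) = f(x(τ),u(τ))`. -/
noncomputable def mpcTraj {p m N : ℕ} [NeZero N]
    (f : (Fin p → ℝ) → (Fin m → ℝ) → Fin p → ℝ)
    (z : Fin p → ℝ) (u : Fin N → Fin m → ℝ) : ℕ → Fin p → ℝ
  | 0 => z
  | τ + 1 => f (mpcTraj f z u τ) (u τ)

open Fin.NatCast in
/-- The horizon-`N` cost `Σ_{τ=0}^{N−1} ℓ(x(τ),u(τ))` of the control sequence `u`. -/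
noncomputable def mpcCost {p m N : ℕ} [NeZero N]
    (f : (Fin p → ℝ) → (Fin m → ℝ) → Fin p → ℝ)
    (ℓ : (Fin p → ℝ) → (Fin m → ℝ) → ℝ)
    (z : Fin p → ℝ) (u : Fin N → Fin m → ℝ) : ℝ :=
  ∑ τ ∈ Finset.range N, ℓ (mpcTraj f z u τ) (u τ)

/-- The horizon-`N` value function `V(z) = inf_u Σ_{τ=0}^{N−1} ℓ(x(τ),u(τ))`. -/
noncomputable def mpcValue {p m : ℕ} (N : ℕ) [NeZero N]
    (f : (Fin p → ℝ) → (Fin m → ℝ) → Fin p → ℝ)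
    (ℓ : (Fin p → ℝ) → (Fin m → ℝ) → ℝ)
    (z : Fin p → ℝ) : ℝ :=
  ⨅ u : Fin N → Fin m → ℝ, mpcCost f ℓ z u

open Fin.NatCast in
/-- Along the MPC closed loop `z_{k+1} = f(z_k, u*_k(0))`, where each `u*_k` attains
the infimum `V(z_k)` and admits a zero-cost terminal control, the optimal costs
`V(z_k)` are nonincreasing and convergent, and the executed stage costs
`ℓ(z_k, u*_k(0))` tend to zero. -/
theorem stmt16 {p m N : ℕ} [NeZero N]
    (f : (Fin p → ℝ) → (Fin m → ℝ) → Fin p → ℝ)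
    (ℓ : (Fin p → ℝ) → (Fin m → ℝ) → ℝ)
    (hℓ : ∀ x u, 0 ≤ ℓ x u)
    (z : ℕ → Fin p → ℝ)
    (ustar : ℕ → Fin N → Fin m → ℝ)
    (hstep : ∀ k, z (k + 1) = f (z k) (ustar k 0))
    (hopt : ∀ k, mpcCost f ℓ (z k) (ustar k) = mpcValue N f ℓ (z k))
    (hterm : ∀ k, ∃ w : Fin m → ℝ, ℓ (mpcTraj f (z k) (ustar k) N) w = 0) :
    (∀ k, mpcValue N f ℓ (z (k + 1)) ≤ mpcValue N f ℓ (z k)) ∧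
    (∃ ζ : ℝ, Tendsto (fun k => mpcValue N f ℓ (z k)) atTop (nhds ζ)) ∧
    Tendsto (fun k => ℓ (z k) (ustar k 0)) atTop (nhds 0) := by
  obtain ⟨M, hM⟩ : ∃ M, N = M + 1 := ⟨N - 1, (Nat.succ_pred_eq_of_pos (Nat.pos_of_ne_zero (NeZero.ne N))).symm⟩
  have hbdd : ∀ zz : Fin p → ℝ, BddBelow (Set.range fun u : Fin N → Fin m → ℝ => mpcCost f ℓ zz u) := by
    rintro zz
    refine ⟨0, ?_⟩
    rintro _ ⟨u, rfl⟩
    exact Finset.sum_nonneg fun τ _ => hℓ _ _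
  have hVnonneg : ∀ zz, 0 ≤ mpcValue N f ℓ zz := by
    intro zz
    exact le_ciInf fun u => Finset.sum_nonneg fun τ _ => hℓ _ _
  -- key inequality
  have key : ∀ k, mpcValue N f ℓ (z (k + 1)) + ℓ (z k) (ustar k 0) ≤ mpcValue N f ℓ (z k) := by
    intro k
    obtain ⟨w, hw⟩ := hterm k
    set u' : Fin N → Fin m → ℝ :=
      fun τ => if h : (τ : ℕ) + 1 < N then ustar k ⟨(τ : ℕ) + 1, h⟩ else w with hu'
    have htraj : ∀ τ : ℕ, τ < N →
        mpcTraj f (z (k + 1)) u' τ = mpcTraj f (z k) (ustar k) (τ + 1) := by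
      intro τ
      induction τ with
      | zero =>
        intro _
        show z (k + 1) = f (mpcTraj f (z k) (ustar k) 0) (ustar k ((0 : ℕ) : Fin N))
        rw [hstep k]
        norm_num [mpcTraj]
      | succ τ ih =>
        intro h
        have hτ : τ < N := Nat.lt_of_succ_lt h
        show f (mpcTraj f (z (k + 1)) u' τ) (u' ((τ : ℕ) : Fin N))
            = f (mpcTraj f (z k) (ustar k) (τ + 1)) (ustar k ((τ + 1 : ℕ) : Fin N))
        have hval : ((τ : Fin N) : ℕ) = τ := Fin.val_cast_of_lt hτ
        have h1 : ((τ : Fin N) : ℕ) + 1 < N := by rw [hval]; exact h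
        have harg2 : (⟨((τ : Fin N) : ℕ) + 1, h1⟩ : Fin N) = ((τ + 1 : ℕ) : Fin N) := by
          apply Fin.ext
          rw [Fin.val_cast_of_lt h]
          simp [hval]
        have harg : u' ((τ : ℕ) : Fin N) = ustar k ((τ + 1 : ℕ) : Fin N) := by
          rw [hu']
          simp only [dif_pos h1]
          rw [harg2]
        rw [ih hτ, harg]
    have hcost : mpcCost f ℓ (z (k + 1)) u' + ℓ (z k) (ustar k 0) = mpcCost f ℓ (z k) (ustar k) := by
      unfold mpcCost
      subst hM
      rw [Finset.sum_range_succ, Finset.sum_range_succ' (fun τ =>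
        ℓ (mpcTraj f (z k) (ustar k) τ) (ustar k ((τ : ℕ) : Fin (M + 1)))) M]
      have hlast : ℓ (mpcTraj f (z (k + 1)) u' M) (u' ((M : ℕ) : Fin (M + 1))) = 0 := by
        have hMlt : M < M + 1 := Nat.lt_succ_self M
        have hval : ((M : Fin (M + 1)) : ℕ) = M := Fin.val_cast_of_lt hMlt
        have hcond : ¬ (((M : Fin (M + 1)) : ℕ) + 1 < M + 1) := by omega
        rw [htraj M hMlt, hu']
        simp only [dif_neg hcond]
        exact hw
      rw [hlast, add_zero]
      have hsum : ∀ τ ∈ Finset.range M,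
          ℓ (mpcTraj f (z (k + 1)) u' τ) (u' ((τ : ℕ) : Fin (M + 1)))
          = ℓ (mpcTraj f (z k) (ustar k) (τ + 1)) (ustar k ((τ + 1 : ℕ) : Fin (M + 1))) := by
        intro τ hτmem
        have hτ : τ < M := Finset.mem_range.mp hτmem
        have hτ' : τ < M + 1 := Nat.lt_succ_of_lt hτ
        have hval : ((τ : Fin (M + 1)) : ℕ) = τ := Fin.val_cast_of_lt hτ'
        have h1 : ((τ : Fin (M + 1)) : ℕ) + 1 < M + 1 := by omega
        have harg2 : (⟨((τ : Fin (M + 1)) : ℕ) + 1, h1⟩ : Fin (M + 1)) = ((τ + 1 : ℕ) : Fin (M + 1)) := by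
          apply Fin.ext
          rw [Fin.val_cast_of_lt (show τ + 1 < M + 1 by omega)]
          simp [hval]
        have harg : u' ((τ : ℕ) : Fin (M + 1)) = ustar k ((τ + 1 : ℕ) : Fin (M + 1)) := by
          rw [hu']
          simp only [dif_pos h1]
          rw [harg2]
        rw [htraj τ hτ', harg]
      rw [Finset.sum_congr rfl hsum]
      have h0 : ℓ (mpcTraj f (z k) (ustar k) 0) (ustar k ((0 : ℕ) : Fin (M + 1)))
          = ℓ (z k) (ustar k 0) := by
        norm_num [mpcTraj]
      rw [h0]
    calc mpcValue N f ℓ (z (k + 1)) + ℓ (z k) (ustar k 0)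
        ≤ mpcCost f ℓ (z (k + 1)) u' + ℓ (z k) (ustar k 0) := by
          exact add_le_add_left (ciInf_le (hbdd _) u') _
      _ = mpcCost f ℓ (z k) (ustar k) := hcost
      _ = mpcValue N f ℓ (z k) := hopt k
  have hmono : ∀ k, mpcValue N f ℓ (z (k + 1)) ≤ mpcValue N f ℓ (z k) := by
    intro k
    have := key k
    have h0 := hℓ (z k) (ustar k 0)
    linarith
  have hanti : Antitone fun k => mpcValue N f ℓ (z k) :=
    antitone_nat_of_succ_le hmono
  have hbdd2 : BddBelow (Set.range fun k => mpcValue N f ℓ (z k)) := by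
    refine ⟨0, ?_⟩
    rintro _ ⟨k, rfl⟩
    exact hVnonneg _
  have hconv : Tendsto (fun k => mpcValue N f ℓ (z k)) atTop
      (nhds (⨅ k, mpcValue N f ℓ (z k))) :=
    tendsto_atTop_ciInf hanti hbdd2
  refine ⟨hmono, ⟨_, hconv⟩, ?_⟩
  have hdiff : Tendsto (fun k => mpcValue N f ℓ (z k) - mpcValue N f ℓ (z (k + 1))) atTop (nhds 0) := by
    have h2 : Tendsto (fun k => mpcValue N f ℓ (z (k + 1))) atTop
        (nhds (⨅ k, mpcValue N f ℓ (z k))) :=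
      hconv.comp (tendsto_add_atTop_nat 1)
    have := hconv.sub h2
    simpa using this
  refine squeeze_zero (fun k => hℓ _ _) (fun k => ?_) hdiff
  have := key k
  linarith
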